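/- Let {X_n : n ≥ 1} and {Y_n : n ≥ 1} be two sequences of positive continuous random variables converging in distribution to X and Y respectively, such that X_n and X have a common interval support for all n and lim_{n→∞} E[X_n] = E[X], and analogously Y_n and Y have a common interval support and lim_{n→∞} E[Y_n] = E[Y]. Fix p_0 ∈ (0,1). If X_n ≤_{p_0-tvar-rl} Y_n for all n, then X ≤_{p_0-tvar-rl} Y. -/

import Mathlib

open MeasureTheory ProbabilityTheory

/-- The quantile (Value at Risk) of a distribution function `F` at level `p`:
`F^{-1}(p) = inf {x : F x ≥ p}`. -/
noncomputable def quantile (F : ℝ → ℝ) (p : ℝ) : ℝ := sInf {x : ℝ | p ≤ F x}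

/-- The distribution function of the residual life `X_t = [X - t ∣ X > t]`:
`F_t(x) = (F(x+t) - F(t))/(1 - F(t))` for `x ≥ 0`, and `0` otherwise. -/
noncomputable def resCDF (F : ℝ → ℝ) (t : ℝ) (x : ℝ) : ℝ :=
  if 0 ≤ x then (F (x + t) - F t) / (1 - F t) else 0

/-- The quantile function of the residual life `X_t`. -/
noncomputable def resQuantile (F : ℝ → ℝ) (t : ℝ) (p : ℝ) : ℝ :=
  quantile (resCDF F t) p

/-- `X ≤_{p₀-tvar-rl} Y`, expressed through the distribution functions `F` of `X` and `G` of `Y`: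
`∫_p^1 F_t^{-1}(u) du ≤ ∫_p^1 G_t^{-1}(u) du` for all `p ∈ [p₀, 1)` and all `t` below the right
endpoints of the supports of `X` and `Y` (equivalently, `F t < 1` and `G t < 1`). -/
def TvarRlLE (F G : ℝ → ℝ) (p₀ : ℝ) : Prop :=
  ∀ t : ℝ, F t < 1 → G t < 1 → ∀ p ∈ Set.Ico p₀ 1,
    (∫ u in p..1, resQuantile F t u) ≤ ∫ u in p..1, resQuantile G t u

/-- The (topological) support of a measure on `ℝ`: points all of whose neighbourhoods have
positive measure. -/
def msupport (μ : Measure ℝ) : Set ℝ := {x : ℝ | ∀ U ∈ nhds x, 0 < μ U}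

open Set Filter
open scoped Topology

section Quantile

variable {F : ℝ → ℝ}

lemma quantile_basic (hmono : Monotone F) (hcont : Continuous F)
    (h0 : Tendsto F atBot (𝓝 0)) (h1 : Tendsto F atTop (𝓝 1))
    {q : ℝ} (hq0 : 0 < q) (hq1 : q < 1) :
    ({x : ℝ | q ≤ F x}).Nonempty ∧ BddBelow {x : ℝ | q ≤ F x} ∧ q ≤ F (quantile F q) := by
  have hne : ({x : ℝ | q ≤ F x}).Nonempty := (h1.eventually (eventually_ge_nhds hq1)).exists
  have hbdd : BddBelow {x : ℝ | q ≤ F x} := by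
    obtain ⟨a, ha⟩ := eventually_atBot.1 (h0.eventually (eventually_lt_nhds hq0))
    exact ⟨a, fun x hx => by
      by_contra hax
      exact absurd hx (not_le.mpr (ha x (le_of_lt (not_le.mp hax))))⟩
  have hclosed : IsClosed {x : ℝ | q ≤ F x} := isClosed_Ici.preimage hcont
  exact ⟨hne, hbdd, hclosed.csInf_mem hne hbdd⟩

lemma quantile_le_iff (hmono : Monotone F) (hcont : Continuous F)
    (h0 : Tendsto F atBot (𝓝 0)) (h1 : Tendsto F atTop (𝓝 1))
    {q x : ℝ} (hq0 : 0 < q) (hq1 : q < 1) :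
    quantile F q ≤ x ↔ q ≤ F x := by
  obtain ⟨hne, hbdd, hmem⟩ := quantile_basic hmono hcont h0 h1 hq0 hq1
  constructor
  · intro h; exact le_trans hmem (hmono h)
  · intro h; exact csInf_le hbdd h

lemma lt_quantile_iff (hmono : Monotone F) (hcont : Continuous F)
    (h0 : Tendsto F atBot (𝓝 0)) (h1 : Tendsto F atTop (𝓝 1))
    {q x : ℝ} (hq0 : 0 < q) (hq1 : q < 1) :
    x < quantile F q ↔ F x < q := by
  rw [← not_le, ← not_le, quantile_le_iff hmono hcont h0 h1 hq0 hq1]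

lemma quantile_pos (hmono : Monotone F) (hcont : Continuous F)
    (h0 : Tendsto F atBot (𝓝 0)) (h1 : Tendsto F atTop (𝓝 1))
    (hF0 : F 0 = 0) {q : ℝ} (hq0 : 0 < q) (hq1 : q < 1) :
    0 < quantile F q := by
  rw [lt_quantile_iff hmono hcont h0 h1 hq0 hq1, hF0]; exact hq0

lemma quantile_mono (hmono : Monotone F) (hcont : Continuous F)
    (h0 : Tendsto F atBot (𝓝 0)) (h1 : Tendsto F atTop (𝓝 1))
    {q q' : ℝ} (hq0 : 0 < q) (hqq' : q ≤ q') (hq1 : q' < 1) :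
    quantile F q ≤ quantile F q' := by
  rw [quantile_le_iff hmono hcont h0 h1 hq0 (lt_of_le_of_lt hqq' hq1)]
  exact le_trans hqq' (quantile_basic hmono hcont h0 h1 (lt_of_lt_of_le hq0 hqq') hq1).2.2

end Quantile



section ResQuantile

variable {F : ℝ → ℝ}

lemma resQuantile_eq (hmono : Monotone F) (hcont : Continuous F)
    (h0 : Tendsto F atBot (𝓝 0)) (h1 : Tendsto F atTop (𝓝 1))
    {t : ℝ} (ht0 : 0 ≤ F t) (ht1 : F t < 1) {u : ℝ} (hu0 : 0 < u) (hu1 : u < 1) :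
    resQuantile F t u = quantile F (F t + u * (1 - F t)) - t := by
  set q : ℝ := F t + u * (1 - F t) with hq_def
  have hd : (0:ℝ) < 1 - F t := by linarith
  have hqFt : F t < q := by nlinarith
  have hq0 : 0 < q := lt_of_le_of_lt ht0 hqFt
  have hq1 : q < 1 := by nlinarith
  have hset : {x : ℝ | u ≤ resCDF F t x} = {x : ℝ | q ≤ F (x + t)} := by
    ext x
    simp only [mem_setOf_eq, resCDF]
    constructor
    · intro hx
      by_cases hx0 : 0 ≤ x
      · rw [if_pos hx0] at hx
        rw [le_div_iff₀ hd] at hx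
        simp only [hq_def]; linarith
      · rw [if_neg hx0] at hx; linarith
    · intro hx
      have hFx : F t < F (x + t) := lt_of_lt_of_le hqFt hx
      have hx0 : 0 ≤ x := by
        by_contra hx0
        have : x + t ≤ t := by linarith [not_le.mp hx0]
        exact absurd (hmono this) (not_le.mpr hFx)
      rw [if_pos hx0, le_div_iff₀ hd]
      simp only [hq_def] at hx; linarith
  have hset2 : {x : ℝ | q ≤ F (x + t)} = Ici (quantile F q - t) := by
    ext x
    simp only [mem_setOf_eq, mem_Ici, ← quantile_le_iff hmono hcont h0 h1 hq0 hq1]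
    constructor <;> intro h <;> linarith
  rw [resQuantile, quantile, hset, hset2, csInf_Ici]

end ResQuantile

section CDF

variable (μ : Measure ℝ) [IsProbabilityMeasure μ]

lemma cdf_tendsto_atBot : Tendsto (fun x => cdf μ x) atBot (𝓝 0) := tendsto_cdf_atBot μ
lemma cdf_tendsto_atTop : Tendsto (fun x => cdf μ x) atTop (𝓝 1) := tendsto_cdf_atTop μ
lemma cdf_mono : Monotone (fun x => cdf μ x) := monotone_cdf μ

lemma cdf_zero_of_pos (hpos : μ (Iic 0) = 0) : cdf μ 0 = 0 := by
  rw [cdf_eq_real, measureReal_def, hpos, ENNReal.toReal_zero]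

/-- The quantile function of `μ`, restricted to `(0,1)` by an indicator. -/
noncomputable def QI (μ : Measure ℝ) : ℝ → ℝ :=
  (Ioo (0:ℝ) 1).indicator (fun u => quantile (fun x => cdf μ x) u)

variable {μ}

lemma QI_nonneg (hc : Continuous fun x => cdf μ x) (hpos : μ (Iic 0) = 0) (u : ℝ) :
    0 ≤ QI μ u := by
  rw [QI]
  by_cases hu : u ∈ Ioo (0:ℝ) 1
  · rw [indicator_of_mem hu]
    exact le_of_lt (quantile_pos (cdf_mono μ) hc (cdf_tendsto_atBot μ) (cdf_tendsto_atTop μ)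
      (cdf_zero_of_pos μ hpos) hu.1 hu.2)
  · rw [indicator_of_notMem hu]

lemma measurable_QI (hc : Continuous fun x => cdf μ x) (hpos : μ (Iic 0) = 0) :
    Measurable (QI μ) := by
  apply measurable_of_Ioi
  intro y
  rcases lt_or_ge y 0 with hy | hy
  · have : QI μ ⁻¹' Ioi y = univ := by
      ext u; simp only [mem_preimage, mem_Ioi, mem_univ, iff_true]
      exact lt_of_lt_of_le hy (QI_nonneg hc hpos u)
    rw [this]; exact MeasurableSet.univ
  · have : QI μ ⁻¹' Ioi y = {u | u ∈ Ioo (0:ℝ) 1 ∧ y < quantile (fun x => cdf μ x) u} := by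
      ext u
      simp only [mem_preimage, mem_Ioi, mem_setOf_eq, QI]
      by_cases hu : u ∈ Ioo (0:ℝ) 1
      · rw [indicator_of_mem hu]; exact ⟨fun h => ⟨hu, h⟩, fun h => h.2⟩
      · rw [indicator_of_notMem hu]
        exact ⟨fun h => absurd (lt_of_le_of_lt hy h) (lt_irrefl 0), fun h => absurd h.1 hu⟩
    rw [this]
    apply Set.OrdConnected.measurableSet
    constructor
    intro u1 h1 u2 h2 v hv
    refine ⟨⟨lt_of_lt_of_le h1.1.1 hv.1, lt_of_le_of_lt hv.2 h2.1.2⟩, lt_of_lt_of_le h1.2 ?_⟩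
    exact quantile_mono (cdf_mono μ) hc (cdf_tendsto_atBot μ) (cdf_tendsto_atTop μ)
      h1.1.1 hv.1 (lt_of_le_of_lt hv.2 h2.1.2)

instance : IsProbabilityMeasure (volume.restrict (Ioo (0:ℝ) 1)) := by
  constructor
  rw [Measure.restrict_apply_univ, Real.volume_Ioo]
  norm_num

lemma map_QI (hc : Continuous fun x => cdf μ x) (hpos : μ (Iic 0) = 0) :
    Measure.map (QI μ) (volume.restrict (Ioo (0:ℝ) 1)) = μ := by
  have hmeas := measurable_QI hc hpos
  refine Measure.ext_of_Iic _ _ (fun x => ?_)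
  rw [Measure.map_apply hmeas measurableSet_Iic,
    Measure.restrict_apply (hmeas measurableSet_Iic)]
  have hiff : ∀ u ∈ Ioo (0:ℝ) 1,
      (QI μ u ≤ x ↔ u ≤ cdf μ x) := by
    intro u hu
    rw [QI, indicator_of_mem hu]
    exact quantile_le_iff (cdf_mono μ) hc (cdf_tendsto_atBot μ) (cdf_tendsto_atTop μ) hu.1 hu.2
  have hseteq : QI μ ⁻¹' Iic x ∩ Ioo (0:ℝ) 1 = Iic (cdf μ x) ∩ Ioo (0:ℝ) 1 := by
    ext u
    simp only [mem_inter_iff, mem_preimage, mem_Iic, and_congr_left_iff]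
    intro hu
    exact hiff u hu
  rw [hseteq, ← ofReal_cdf μ x]
  rcases lt_or_eq_of_le (cdf_le_one μ x) with h1 | h1
  · have : Iic (cdf μ x) ∩ Ioo (0:ℝ) 1 = Ioc 0 (cdf μ x) := by
      ext u
      simp only [mem_inter_iff, mem_Iic, mem_Ioo, mem_Ioc]
      constructor
      · rintro ⟨h, h2, _⟩; exact ⟨h2, h⟩
      · rintro ⟨h2, h⟩; exact ⟨h, h2, lt_of_le_of_lt h h1⟩
    rw [this, Real.volume_Ioc, sub_zero]
  · have : Iic (cdf μ x) ∩ Ioo (0:ℝ) 1 = Ioo 0 1 := by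
      ext u
      simp only [mem_inter_iff, mem_Iic, mem_Ioo, and_iff_right_iff_imp]
      intro hu; rw [h1]; exact le_of_lt hu.2
    rw [this, Real.volume_Ioo, h1]
    norm_num

lemma integrable_QI (hc : Continuous fun x => cdf μ x) (hpos : μ (Iic 0) = 0)
    (hm : Integrable id μ) : Integrable (QI μ) (volume.restrict (Ioo (0:ℝ) 1)) := by
  have h := hm
  rw [← map_QI hc hpos] at h
  have := (integrable_map_measure aestronglyMeasurable_id
    (measurable_QI hc hpos).aemeasurable).mp h
  simpa [Function.comp] using this

lemma integral_QI (hc : Continuous fun x => cdf μ x) (hpos : μ (Iic 0) = 0) :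
    ∫ u in Ioo (0:ℝ) 1, QI μ u = ∫ x, x ∂μ := by
  conv_rhs => rw [← map_QI hc hpos]
  exact (integral_map (measurable_QI hc hpos).aemeasurable aestronglyMeasurable_id).symm

lemma integrable_QI_vol (hc : Continuous fun x => cdf μ x) (hpos : μ (Iic 0) = 0)
    (hm : Integrable id μ) : Integrable (QI μ) volume := by
  have h1 : IntegrableOn (QI μ) (Ioo (0:ℝ) 1) volume := integrable_QI hc hpos hm
  have : QI μ = (Ioo (0:ℝ) 1).indicator (QI μ) := by
    ext u
    by_cases hu : u ∈ Ioo (0:ℝ) 1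
    · rw [indicator_of_mem hu]
    · rw [indicator_of_notMem hu, QI, indicator_of_notMem hu]
  rw [this, integrable_indicator_iff measurableSet_Ioo]
  exact h1

end CDF

section Helly

lemma tendsto_quantile_of_flat {Fn : ℕ → ℝ → ℝ} {F : ℝ → ℝ}
    (hFnm : ∀ n, Monotone (Fn n)) (hFnc : ∀ n, Continuous (Fn n))
    (hFn0 : ∀ n, Tendsto (Fn n) atBot (𝓝 0)) (hFn1 : ∀ n, Tendsto (Fn n) atTop (𝓝 1))
    (hFm : Monotone F) (hFc : Continuous F)
    (hF0 : Tendsto F atBot (𝓝 0)) (hF1 : Tendsto F atTop (𝓝 1))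
    (hd : ∀ x, Tendsto (fun n => Fn n x) atTop (𝓝 (F x)))
    {u : ℝ} (hu0 : 0 < u) (hu1 : u < 1)
    (hflat : ∀ ε > 0, u < F (quantile F u + ε)) :
    Tendsto (fun n => quantile (Fn n) u) atTop (𝓝 (quantile F u)) := by
  rw [Metric.tendsto_atTop]
  intro ε hε
  set Q := quantile F u with hQ
  have hlt : F (Q - ε/2) < u := by
    have : ¬ (quantile F u ≤ Q - ε/2) := by
      rw [hQ]; intro h; linarith
    rwa [quantile_le_iff hFm hFc hF0 hF1 hu0 hu1, not_le] at this
  have h₁ : ∀ᶠ n in atTop, Fn n (Q - ε/2) < u := (hd _).eventually (eventually_lt_nhds hlt)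
  have h₂ : ∀ᶠ n in atTop, u < Fn n (Q + ε/2) :=
    (hd _).eventually (eventually_gt_nhds (hflat (ε/2) (by linarith)))
  obtain ⟨N, hN⟩ := eventually_atTop.1 (h₁.and h₂)
  refine ⟨N, fun n hn => ?_⟩
  obtain ⟨hn1, hn2⟩ := hN n hn
  have hub : quantile (Fn n) u ≤ Q + ε/2 := by
    rw [quantile_le_iff (hFnm n) (hFnc n) (hFn0 n) (hFn1 n) hu0 hu1]
    exact le_of_lt hn2
  have hlb : Q - ε/2 < quantile (Fn n) u := by
    rw [lt_quantile_iff (hFnm n) (hFnc n) (hFn0 n) (hFn1 n) hu0 hu1]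
    exact hn1
  rw [Real.dist_eq, abs_lt]
  constructor <;> [linarith; linarith]

lemma bad_countable {F : ℝ → ℝ}
    (hFm : Monotone F) (hFc : Continuous F)
    (hF0 : Tendsto F atBot (𝓝 0)) (hF1 : Tendsto F atTop (𝓝 1)) :
    Set.Countable {u : ℝ | u ∈ Ioo (0:ℝ) 1 ∧ ¬ ∀ ε > 0, u < F (quantile F u + ε)} := by
  apply Set.Countable.mono ?_ (Set.countable_range fun r : ℚ => F r)
  rintro u ⟨hu, hbad⟩
  push_neg at hbad
  obtain ⟨ε, hε, hle⟩ := hbad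
  have hQmem := (quantile_basic hFm hFc hF0 hF1 hu.1 hu.2).2.2
  have heq1 : F (quantile F u + ε) = u :=
    le_antisymm hle (le_trans hQmem (hFm (by linarith)))
  obtain ⟨r, hr1, hr2⟩ := exists_rat_btwn (show quantile F u < quantile F u + ε by linarith)
  refine ⟨r, ?_⟩
  have h1 : F r ≤ u := heq1 ▸ hFm (le_of_lt hr2)
  have h2 : u ≤ F r := le_trans hQmem (hFm (le_of_lt hr1))
  exact le_antisymm h1 h2

end Helly

section Scheffe

lemma min_eq_formula (a b : ℝ) : |a - b| = a + b - 2 * min a b := by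
  rcases le_total a b with h | h
  · rw [min_eq_left h, abs_of_nonpos (by linarith)]; ring
  · rw [min_eq_right h, abs_of_nonneg (by linarith)]; ring

lemma scheffe {α : Type*} [MeasurableSpace α] {ρ : Measure α} {fn : ℕ → α → ℝ} {f : α → ℝ}
    (hfi : ∀ n, Integrable (fn n) ρ) (hf : Integrable f ρ)
    (hnn : ∀ n, 0 ≤ᵐ[ρ] fn n) (hfnn : 0 ≤ᵐ[ρ] f)
    (hae : ∀ᵐ x ∂ρ, Tendsto (fun n => fn n x) atTop (𝓝 (f x)))
    (hint : Tendsto (fun n => ∫ x, fn n x ∂ρ) atTop (𝓝 (∫ x, f x ∂ρ))) :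
    Tendsto (fun n => ∫ x, |fn n x - f x| ∂ρ) atTop (𝓝 0) := by
  have hmin_int : ∀ n, Integrable (fun x => min (fn n x) (f x)) ρ := fun n =>
    (hfi n).inf hf
  have hminlim : Tendsto (fun n => ∫ x, min (fn n x) (f x) ∂ρ) atTop (𝓝 (∫ x, f x ∂ρ)) := by
    apply tendsto_integral_of_dominated_convergence (fun x => |f x|)
      (fun n => (hmin_int n).aestronglyMeasurable) hf.abs
    · intro n
      filter_upwards [hnn n, hfnn] with x h1 h2
      rw [Real.norm_eq_abs, abs_of_nonneg (le_min h1 h2)]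
      exact le_trans (min_le_right _ _) (le_abs_self _)
    · filter_upwards [hae] with x hx
      have := hx.min (tendsto_const_nhds (x := f x))
      rwa [min_self] at this
  have heq : ∀ n, ∫ x, |fn n x - f x| ∂ρ
      = (∫ x, fn n x ∂ρ) + (∫ x, f x ∂ρ) - 2 * ∫ x, min (fn n x) (f x) ∂ρ := by
    intro n
    have : (fun x => |fn n x - f x|)
        = fun x => fn n x + f x - 2 * min (fn n x) (f x) := by
      funext x; exact min_eq_formula _ _
    have hadd : Integrable (fun x => fn n x + f x) ρ := (hfi n).add hf
    have hcm : Integrable (fun x => 2 * min (fn n x) (f x)) ρ := (hmin_int n).const_mul 2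
    rw [this, integral_sub hadd hcm, integral_add (hfi n) hf, MeasureTheory.integral_const_mul]
  have : Tendsto (fun n => (∫ x, fn n x ∂ρ) + (∫ x, f x ∂ρ)
      - 2 * ∫ x, min (fn n x) (f x) ∂ρ) atTop
      (𝓝 ((∫ x, f x ∂ρ) + (∫ x, f x ∂ρ) - 2 * ∫ x, f x ∂ρ)) :=
    (hint.add tendsto_const_nhds).sub (hminlim.const_mul 2)
  rw [show (∫ x, f x ∂ρ) + (∫ x, f x ∂ρ) - 2 * ∫ x, f x ∂ρ = 0 by ring] at this
  exact this.congr (fun n => (heq n).symm)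

end Scheffe

section Seq

variable (μn : ℕ → Measure ℝ) (μ : Measure ℝ)
  [∀ n, IsProbabilityMeasure (μn n)] [IsProbabilityMeasure μ]
  (hposn : ∀ n, (μn n) (Iic 0) = 0) (hpos : μ (Iic 0) = 0)
  (hcn : ∀ n, Continuous fun x => cdf (μn n) x) (hc : Continuous fun x => cdf μ x)
  (hd : ∀ x : ℝ, ContinuousAt (fun y => cdf μ y) x →
    Tendsto (fun n => cdf (μn n) x) atTop (𝓝 (cdf μ x)))
  (hmn : ∀ n, Integrable id (μn n)) (hm : Integrable id μ)
  (ht : Tendsto (fun n => ∫ x, x ∂(μn n)) atTop (𝓝 (∫ x, x ∂μ)))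

include hposn hpos hcn hc hd hmn hm ht

lemma L1conv :
    Tendsto (fun n => ∫ u in Ioo (0:ℝ) 1, |QI (μn n) u - QI μ u|) atTop (𝓝 0) := by
  apply scheffe (fun n => integrable_QI (hcn n) (hposn n) (hmn n)) (integrable_QI hc hpos hm)
    (fun n => ae_of_all _ (QI_nonneg (hcn n) (hposn n))) (ae_of_all _ (QI_nonneg hc hpos))
  · -- a.e. convergence
    have hbadc := bad_countable (cdf_mono μ) hc (cdf_tendsto_atBot μ) (cdf_tendsto_atTop μ)
    have hbad : ∀ᵐ u : ℝ ∂volume,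
        u ∉ {u : ℝ | u ∈ Ioo (0:ℝ) 1 ∧
          ¬ ∀ ε > 0, u < cdf μ (quantile (fun x => cdf μ x) u + ε)} :=
      hbadc.ae_notMem _
    filter_upwards [ae_restrict_of_ae hbad, ae_restrict_mem measurableSet_Ioo] with u h1 h2
    have hflat : ∀ ε > 0, u < cdf μ (quantile (fun x => cdf μ x) u + ε) := by
      by_contra hcon
      exact h1 ⟨h2, hcon⟩
    have heq : ∀ n, QI (μn n) u = quantile (fun x => cdf (μn n) x) u := fun n => by
      rw [QI, indicator_of_mem h2]
    have heq2 : QI μ u = quantile (fun x => cdf μ x) u := by rw [QI, indicator_of_mem h2]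
    rw [heq2]
    refine Tendsto.congr (fun n => (heq n).symm) ?_
    exact tendsto_quantile_of_flat (fun n => cdf_mono (μn n)) hcn
      (fun n => cdf_tendsto_atBot (μn n)) (fun n => cdf_tendsto_atTop (μn n))
      (cdf_mono μ) hc (cdf_tendsto_atBot μ) (cdf_tendsto_atTop μ)
      (fun x => hd x (hc.continuousAt)) h2.1 h2.2 hflat
  · -- convergence of integrals
    have h1 : ∀ n, ∫ u in Ioo (0:ℝ) 1, QI (μn n) u = ∫ x, x ∂(μn n) := fun n =>
      integral_QI (hcn n) (hposn n)
    have h2 : ∫ u in Ioo (0:ℝ) 1, QI μ u = ∫ x, x ∂μ := integral_QI hc hpos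
    rw [h2]
    exact ht.congr (fun n => (h1 n).symm)

lemma tendsto_tail {qn : ℕ → ℝ} {q : ℝ} (hqn : ∀ n, qn n ∈ Ioo (0:ℝ) 1)
    (hq : Tendsto qn atTop (𝓝 q)) :
    Tendsto (fun n => ∫ v in (qn n)..1, QI (μn n) v) atTop (𝓝 (∫ v in q..1, QI μ v)) := by
  have hg : ∀ n, Integrable (QI (μn n)) volume := fun n =>
    integrable_QI_vol (hcn n) (hposn n) (hmn n)
  have hgl : Integrable (QI μ) volume := integrable_QI_vol hc hpos hm
  have heq : ∀ n, ∫ v in qn n..1, QI (μn n) v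
      = (∫ v in qn n..1, QI μ v) + ∫ v in qn n..1, (QI (μn n) v - QI μ v) := by
    intro n
    rw [intervalIntegral.integral_sub ((hg n).intervalIntegrable) (hgl.intervalIntegrable)]
    ring
  rw [show (∫ v in q..1, QI μ v) = (∫ v in q..1, QI μ v) + 0 by ring]
  refine Tendsto.congr (fun n => (heq n).symm) (Tendsto.add ?_ ?_)
  · have hcontp : Continuous fun r => ∫ v in r..(1:ℝ), QI μ v := by
      have h := intervalIntegral.continuous_primitive (fun a b => hgl.intervalIntegrable) (1:ℝ)
      have heq2 : (fun r => ∫ v in r..(1:ℝ), QI μ v)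
          = fun r => -∫ v in (1:ℝ)..r, QI μ v := by
        funext r; rw [intervalIntegral.integral_symm]
      rw [heq2]; exact h.neg
    exact (hcontp.tendsto q).comp hq
  · have hL1 := L1conv μn μ hposn hpos hcn hc hd hmn hm ht
    apply squeeze_zero_norm ?_ hL1
    intro n
    rw [Real.norm_eq_abs]
    have h1 : |∫ v in qn n..1, (QI (μn n) v - QI μ v)|
        ≤ ∫ v in qn n..1, |QI (μn n) v - QI μ v| :=
      intervalIntegral.abs_integral_le_integral_abs (le_of_lt (hqn n).2)
    have h2 : ∫ v in qn n..1, |QI (μn n) v - QI μ v|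
        ≤ ∫ u in Ioo (0:ℝ) 1, |QI (μn n) u - QI μ u| := by
      rw [intervalIntegral.integral_of_le (le_of_lt (hqn n).2), integral_Ioc_eq_integral_Ioo]
      apply setIntegral_mono_set
      · exact ((hg n).sub hgl).abs.integrableOn
      · exact ae_of_all _ (fun x => abs_nonneg _)
      · exact HasSubset.Subset.eventuallyLE
          (fun x hx => ⟨lt_trans (hqn n).1 hx.1, hx.2⟩)
    exact le_trans h1 h2

end Seq


lemma null_compl_msupport (μ : Measure ℝ) : μ ((msupport μ)ᶜ) = 0 := by
  have hT : μ (⋃ r : ℚ × ℚ,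
      (if μ (Ioo (r.1:ℝ) (r.2:ℝ)) = 0 then Ioo (r.1:ℝ) (r.2:ℝ) else ∅)) = 0 := by
    apply measure_iUnion_null
    intro r
    split_ifs with h
    · exact h
    · exact measure_empty
  refine measure_mono_null (fun x hx => ?_) hT
  simp only [msupport, mem_compl_iff, mem_setOf_eq, not_forall] at hx
  obtain ⟨U, hU, hUm⟩ := hx
  have hU0 : μ U = 0 := le_antisymm (not_lt.mp hUm) zero_le
  obtain ⟨a, b, hab, hsub⟩ := mem_nhds_iff_exists_Ioo_subset.mp hU
  obtain ⟨ra, hra1, hra2⟩ := exists_rat_btwn hab.1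
  obtain ⟨rb, hrb1, hrb2⟩ := exists_rat_btwn hab.2
  have hnull : μ (Ioo (ra:ℝ) (rb:ℝ)) = 0 :=
    measure_mono_null (fun y hy => hsub ⟨lt_trans hra1 hy.1, lt_trans hy.2 hrb2⟩) hU0
  refine mem_iUnion.mpr ⟨(ra, rb), ?_⟩
  rw [if_pos hnull]
  exact ⟨hra2, hrb1⟩

lemma cdf_lt_one_of_msupport {μ' μ : Measure ℝ} [IsProbabilityMeasure μ']
    [IsProbabilityMeasure μ] (hss : msupport μ' = msupport μ) {t : ℝ}
    (ht : cdf μ t < 1) : cdf μ' t < 1 := by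
  rcases lt_or_eq_of_le (cdf_le_one μ' t) with h | h
  · exact h
  exfalso
  have h1 : μ' (Iic t) = 1 := by rw [← ofReal_cdf, h, ENNReal.ofReal_one]
  have hIoi : μ' (Ioi t) = 0 := by
    have hcompl := measure_compl (measurableSet_Iic (a := t)) (measure_ne_top μ' _)
    rw [compl_Iic, h1, measure_univ, tsub_self] at hcompl
    exact hcompl
  have hsub : msupport μ ⊆ Iic t := by
    intro x hx
    rw [← hss] at hx
    by_contra hxt
    have hmem : Ioi t ∈ nhds x := isOpen_Ioi.mem_nhds (show t < x from not_le.mp hxt)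
    have := hx _ hmem
    rw [hIoi] at this
    exact lt_irrefl 0 this
  have hμIoi : μ (Ioi t) = 0 := by
    apply measure_mono_null ?_ (null_compl_msupport μ)
    intro y hy
    simp only [mem_compl_iff]
    intro hc2
    exact absurd (hsub hc2) (show ¬ y ≤ t from not_le.mpr hy)
  have h2 : (1:ENNReal) ≤ μ (Iic t) := by
    have hcompl := measure_compl (measurableSet_Iic (a := t)) (measure_ne_top μ _)
    rw [compl_Iic, hμIoi, measure_univ] at hcompl
    exact tsub_eq_zero_iff_le.mp hcompl.symm
  have h3 : cdf μ t = 1 := by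
    rw [cdf_eq_real, measureReal_def]
    rw [le_antisymm prob_le_one h2]
    simp
  linarith

lemma integral_resQuantile (μ : Measure ℝ) [IsProbabilityMeasure μ]
    (hc : Continuous fun x => cdf μ x) (hpos : μ (Iic 0) = 0) (hm : Integrable id μ)
    {t p : ℝ} (ht1 : cdf μ t < 1) (hp0 : 0 < p) (hp1 : p < 1) :
    ∫ u in p..1, resQuantile (fun x => cdf μ x) t u
      = (1 - cdf μ t)⁻¹ * ((∫ v in (cdf μ t + p * (1 - cdf μ t))..1, QI μ v)
        - (1 - (cdf μ t + p * (1 - cdf μ t))) * t) := by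
  have hd0 : (0:ℝ) < 1 - cdf μ t := by linarith
  have hc0 : (0:ℝ) ≤ cdf μ t := cdf_nonneg μ t
  set c : ℝ := cdf μ t with hc_def
  set d : ℝ := 1 - c with hd_def
  set K : ℝ → ℝ := fun v => QI μ v - t with hK_def
  have hKint : ∀ a b : ℝ, IntervalIntegrable K volume a b := fun a b =>
    ((integrable_QI_vol hc hpos hm).intervalIntegrable).sub intervalIntegrable_const
  have step1 : ∫ u in p..1, resQuantile (fun x => cdf μ x) t u
      = ∫ u in p..1, K (d * u + c) := by
    apply intervalIntegral.integral_congr_ae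
    have h1 : ∀ᵐ u : ℝ ∂volume, u ≠ 1 := by
      rw [ae_iff]
      have : {u : ℝ | ¬ u ≠ 1} = {1} := by ext u; simp
      rw [this]
      exact measure_singleton 1
    filter_upwards [h1] with u hune hmem
    rw [uIoc_of_le (le_of_lt hp1)] at hmem
    have hu0 : 0 < u := lt_trans hp0 hmem.1
    have hu1 : u < 1 := lt_of_le_of_ne hmem.2 hune
    rw [resQuantile_eq (cdf_mono μ) hc (cdf_tendsto_atBot μ) (cdf_tendsto_atTop μ)
      hc0 ht1 hu0 hu1]
    have hmem2 : c + u * (1 - c) ∈ Ioo (0:ℝ) 1 := by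
      constructor
      · have : 0 < u * (1 - c) := mul_pos hu0 (by simpa [hd_def] using hd0)
        linarith
      · nlinarith [hd0, hu1]
    simp only [hK_def, ← hc_def]
    rw [show d * u + c = c + u * (1 - c) from by rw [hd_def]; ring, QI,
      indicator_of_mem hmem2]
  have step2 : ∫ u in p..1, K (d * u + c) = d⁻¹ • ∫ v in d*p+c..d*1+c, K v :=
    intervalIntegral.integral_comp_mul_add K (ne_of_gt hd0) c
  have step3 : ∫ v in d*p+c..d*1+c, K v
      = (∫ v in (c + p * d)..1, QI μ v) - (1 - (c + p * d)) * t := by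
    have h1 : d * 1 + c = 1 := by rw [hd_def]; ring
    have h2 : d * p + c = c + p * d := by ring
    rw [h1, h2, hK_def]
    rw [intervalIntegral.integral_sub ((integrable_QI_vol hc hpos hm).intervalIntegrable)
      intervalIntegrable_const, intervalIntegral.integral_const]
    rw [smul_eq_mul]
  rw [step1, step2, step3, smul_eq_mul, hd_def]

lemma key_tendsto (μn : ℕ → Measure ℝ) (μ : Measure ℝ)
    [∀ n, IsProbabilityMeasure (μn n)] [IsProbabilityMeasure μ]
    (hposn : ∀ n, (μn n) (Iic 0) = 0) (hpos : μ (Iic 0) = 0)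
    (hcn : ∀ n, Continuous fun x => cdf (μn n) x) (hc : Continuous fun x => cdf μ x)
    (hd : ∀ x : ℝ, ContinuousAt (fun y => cdf μ y) x →
      Tendsto (fun n => cdf (μn n) x) atTop (𝓝 (cdf μ x)))
    (hmn : ∀ n, Integrable id (μn n)) (hm : Integrable id μ)
    (ht : Tendsto (fun n => ∫ x, x ∂(μn n)) atTop (𝓝 (∫ x, x ∂μ)))
    {t p : ℝ} (hFnlt : ∀ n, cdf (μn n) t < 1)
    (ht1 : cdf μ t < 1) (hp0 : 0 < p) (hp1 : p < 1) :
    Tendsto (fun n => ∫ u in p..1, resQuantile (fun x => cdf (μn n) x) t u) atTop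
      (𝓝 (∫ u in p..1, resQuantile (fun x => cdf μ x) t u)) := by
  have hct : Tendsto (fun n => cdf (μn n) t) atTop (𝓝 (cdf μ t)) := hd t hc.continuousAt
  set q : ℝ := cdf μ t + p * (1 - cdf μ t) with hq_def
  set qn : ℕ → ℝ := fun n => cdf (μn n) t + p * (1 - cdf (μn n) t) with hqn_def
  have hqn_mem : ∀ n, qn n ∈ Ioo (0:ℝ) 1 := by
    intro n
    have h1 : (0:ℝ) ≤ cdf (μn n) t := cdf_nonneg _ t
    have h2 : cdf (μn n) t < 1 := hFnlt n
    constructor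
    · have : 0 < p * (1 - cdf (μn n) t) := mul_pos hp0 (by linarith)
      simp only [hqn_def]; linarith
    · simp only [hqn_def]; nlinarith
  have hqt : Tendsto qn atTop (𝓝 q) := by
    rw [hq_def]
    exact hct.add ((tendsto_const_nhds (x := p)).mul (tendsto_const_nhds.sub hct))
  have hJ := tendsto_tail μn μ hposn hpos hcn hc hd hmn hm ht hqn_mem hqt
  have heqn : ∀ n, ∫ u in p..1, resQuantile (fun x => cdf (μn n) x) t u
      = (1 - cdf (μn n) t)⁻¹ * ((∫ v in (qn n)..1, QI (μn n) v) - (1 - qn n) * t) :=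
    fun n => integral_resQuantile (μn n) (hcn n) (hposn n) (hmn n) (hFnlt n) hp0 hp1
  have heq : ∫ u in p..1, resQuantile (fun x => cdf μ x) t u
      = (1 - cdf μ t)⁻¹ * ((∫ v in q..1, QI μ v) - (1 - q) * t) :=
    integral_resQuantile μ hc hpos hm ht1 hp0 hp1
  rw [heq]
  refine Tendsto.congr (fun n => (heqn n).symm) ?_
  refine Tendsto.mul ((tendsto_const_nhds.sub hct).inv₀ (by linarith)) ?_
  exact hJ.sub (((tendsto_const_nhds.sub hqt)).mul tendsto_const_nhds)


/-- Closure of the `p₀-tvar-rl` order under convergence in distribution: if `Xₙ → X` and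
`Yₙ → Y` in distribution, the random variables are positive and continuous, `Xₙ` and `X`
(resp. `Yₙ` and `Y`) have a common interval support, the means converge, and
`Xₙ ≤_{p₀-tvar-rl} Yₙ` for all `n`, then `X ≤_{p₀-tvar-rl} Y`. -/
theorem stmt2 (μn νn : ℕ → Measure ℝ) (μ ν : Measure ℝ)
    [∀ n, IsProbabilityMeasure (μn n)] [∀ n, IsProbabilityMeasure (νn n)]
    [IsProbabilityMeasure μ] [IsProbabilityMeasure ν]
    -- positivity of the random variables
    (hposXn : ∀ n, (μn n) (Set.Iic 0) = 0) (hposX : μ (Set.Iic 0) = 0)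
    (hposYn : ∀ n, (νn n) (Set.Iic 0) = 0) (hposY : ν (Set.Iic 0) = 0)
    -- continuity of the random variables
    (hcXn : ∀ n, Continuous fun x => cdf (μn n) x) (hcX : Continuous fun x => cdf μ x)
    (hcYn : ∀ n, Continuous fun x => cdf (νn n) x) (hcY : Continuous fun x => cdf ν x)
    -- convergence in distribution
    (hdX : ∀ x : ℝ, ContinuousAt (fun y => cdf μ y) x →
      Filter.Tendsto (fun n => cdf (μn n) x) Filter.atTop (nhds (cdf μ x)))
    (hdY : ∀ x : ℝ, ContinuousAt (fun y => cdf ν y) x →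
      Filter.Tendsto (fun n => cdf (νn n) x) Filter.atTop (nhds (cdf ν x)))
    -- common interval supports
    (hsX : ∀ n, msupport (μn n) = msupport μ) (hiX : (msupport μ).OrdConnected)
    (hsY : ∀ n, msupport (νn n) = msupport ν) (hiY : (msupport ν).OrdConnected)
    -- finite means and convergence of the means
    (hmXn : ∀ n, Integrable id (μn n)) (hmX : Integrable id μ)
    (hmYn : ∀ n, Integrable id (νn n)) (hmY : Integrable id ν)
    (htX : Filter.Tendsto (fun n => ∫ x, x ∂(μn n)) Filter.atTop (nhds (∫ x, x ∂μ)))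
    (htY : Filter.Tendsto (fun n => ∫ x, x ∂(νn n)) Filter.atTop (nhds (∫ x, x ∂ν)))
    (p₀ : ℝ) (hp₀ : p₀ ∈ Set.Ioo (0 : ℝ) 1)
    (hord : ∀ n, TvarRlLE (fun x => cdf (μn n) x) (fun x => cdf (νn n) x) p₀) :
    TvarRlLE (fun x => cdf μ x) (fun x => cdf ν x) p₀ := by
  intro t htF htG p hp
  have hb0 : 0 < p := lt_of_lt_of_le hp₀.1 hp.1
  have hb1 : p < 1 := hp.2
  have hFnlt : ∀ n, cdf (μn n) t < 1 := fun n => cdf_lt_one_of_msupport (hsX n) htF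
  have hGnlt : ∀ n, cdf (νn n) t < 1 := fun n => cdf_lt_one_of_msupport (hsY n) htG
  have hA := key_tendsto μn μ hposXn hposX hcXn hcX hdX hmXn hmX htX hFnlt htF hb0 hb1
  have hB := key_tendsto νn ν hposYn hposY hcYn hcY hdY hmYn hmY htY hGnlt htG hb0 hb1
  exact le_of_tendsto_of_tendsto' hA hB (fun n => hord n t (hFnlt n) (hGnlt n) p hp)
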